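/- Let h : [0,1] → ℝ be a measurable function that is nowhere approximately differentiable. If X ⊆ [0,1] is a measurable set of positive measure and χ_X·h is integral over AD[0,1] (i.e., satisfies a monic polynomial equation with coefficients in AD[0,1], multiplied by χ_X), then a contradiction follows; that is, for any monic polynomial p with coefficients in AD[0,1], χ_X·p(h) ≠ 0 on any set of positive measure. In particular, for the commutative algebra case n = 1: h − a is invertible in S[0,1] (its support is all of [0,1]) for every a ∈ AD[0,1]. -/

import Mathlib

open MeasureTheory Set Filter
open scoped ENNReal

noncomputable def densityOne (E : Set ℝ) (t : ℝ) : Prop :=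
  Tendsto (fun h : ℝ => volume (E ∩ Icc (t - h) (t + h)) / ENNReal.ofReal (2 * h))
    (nhdsWithin 0 (Ioi 0)) (nhds 1)

lemma volume_Icc2 (t r : ℝ) : volume (Icc (t - r) (t + r)) = ENNReal.ofReal (2 * r) := by
  rw [Real.volume_Icc]; ring_nf

lemma ratio_le_one {S : Set ℝ} {t r : ℝ} (hr : 0 < r) :
    volume (S ∩ Icc (t - r) (t + r)) / ENNReal.ofReal (2 * r) ≤ 1 := by
  apply ENNReal.div_le_of_le_mul
  rw [one_mul, ← volume_Icc2 t r]
  exact measure_mono inter_subset_right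

lemma densityOne_mono {S S' : Set ℝ} {t : ℝ} (hd : densityOne S t) (hss : S ⊆ S') :
    densityOne S' t := by
  apply tendsto_of_tendsto_of_tendsto_of_le_of_le' hd tendsto_const_nhds
  · exact Eventually.of_forall fun r =>
      ENNReal.div_le_div_right (measure_mono (inter_subset_inter_left _ hss)) _
  · filter_upwards [self_mem_nhdsWithin] with r (hr : 0 < r) using ratio_le_one hr

lemma densityOne_univ (t : ℝ) : densityOne univ t := by
  apply Tendsto.congr' _ (tendsto_const_nhds (x := (1:ℝ≥0∞)))
  filter_upwards [self_mem_nhdsWithin] with r (hr : 0 < r)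
  rw [univ_inter, volume_Icc2]
  rw [ENNReal.div_self (by positivity) ENNReal.ofReal_ne_top]

lemma densityOne_Ioo {t δ : ℝ} (hδ : 0 < δ) : densityOne (Ioo (t - δ) (t + δ)) t := by
  apply Tendsto.congr' _ (tendsto_const_nhds (x := (1:ℝ≥0∞)))
  filter_upwards [Ioo_mem_nhdsGT_of_mem ⟨le_refl 0, hδ⟩] with r hr
  obtain ⟨hr0, hrδ⟩ := hr
  rw [inter_eq_self_of_subset_right, volume_Icc2,
    ENNReal.div_self (by positivity) ENNReal.ofReal_ne_top]
  exact Icc_subset_Ioo (by linarith) (by linarith)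

lemma densityOne_inter {A B : Set ℝ} {t : ℝ} (hA : densityOne A t) (hB : densityOne B t)
    (hBm : MeasurableSet B) : densityOne (A ∩ B) t := by
  have key : ∀ r : ℝ, 0 < r →
      volume (A ∩ Icc (t - r) (t + r)) / ENNReal.ofReal (2 * r) +
      volume (B ∩ Icc (t - r) (t + r)) / ENNReal.ofReal (2 * r) ≤
      volume ((A ∩ B) ∩ Icc (t - r) (t + r)) / ENNReal.ofReal (2 * r) + 1 := by
    intro r hr
    set I := Icc (t - r) (t + r)
    have h1 : volume (A ∩ I) ≤ volume ((A ∩ B) ∩ I) + volume (I \ B) := by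
      calc volume (A ∩ I) ≤ volume ((A ∩ I) ∩ B) + volume ((A ∩ I) \ B) :=
            measure_le_inter_add_diff _ _ _
        _ ≤ volume ((A ∩ B) ∩ I) + volume (I \ B) :=
            add_le_add
              (measure_mono (fun x hx => ⟨⟨hx.1.1, hx.2⟩, hx.1.2⟩))
              (measure_mono (diff_subset_diff_left inter_subset_right))
    have h2 : volume (I ∩ B) + volume (I \ B) = volume I := measure_inter_add_diff I hBm
    have h3 : volume (A ∩ I) + volume (B ∩ I) ≤ volume ((A ∩ B) ∩ I) + volume I := by
      calc volume (A ∩ I) + volume (B ∩ I)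
          ≤ (volume ((A ∩ B) ∩ I) + volume (I \ B)) + volume (B ∩ I) := by gcongr
        _ = volume ((A ∩ B) ∩ I) + (volume (I ∩ B) + volume (I \ B)) := by
            rw [inter_comm B I]; ring
        _ = volume ((A ∩ B) ∩ I) + volume I := by rw [h2]
    calc volume (A ∩ I) / ENNReal.ofReal (2 * r) + volume (B ∩ I) / ENNReal.ofReal (2 * r)
        = (volume (A ∩ I) + volume (B ∩ I)) / ENNReal.ofReal (2 * r) :=
          ENNReal.div_add_div_same
      _ ≤ (volume ((A ∩ B) ∩ I) + volume I) / ENNReal.ofReal (2 * r) :=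
          ENNReal.div_le_div_right h3 _
      _ = volume ((A ∩ B) ∩ I) / ENNReal.ofReal (2 * r) + volume I / ENNReal.ofReal (2 * r) :=
          ENNReal.div_add_div_same.symm
      _ = volume ((A ∩ B) ∩ I) / ENNReal.ofReal (2 * r) + 1 := by
          rw [volume_Icc2, ENNReal.div_self (by positivity) ENNReal.ofReal_ne_top]
  have hsum : Tendsto (fun r : ℝ =>
      volume (A ∩ Icc (t - r) (t + r)) / ENNReal.ofReal (2 * r) +
      volume (B ∩ Icc (t - r) (t + r)) / ENNReal.ofReal (2 * r) - 1)
      (nhdsWithin 0 (Ioi 0)) (nhds 1) := by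
    have hs := ENNReal.Tendsto.sub (hA.add hB) (tendsto_const_nhds (x := (1:ℝ≥0∞)))
      (Or.inr ENNReal.one_ne_top)
    rwa [ENNReal.add_sub_cancel_right ENNReal.one_ne_top] at hs
  unfold densityOne
  apply tendsto_of_tendsto_of_tendsto_of_le_of_le' hsum tendsto_const_nhds
  · filter_upwards [self_mem_nhdsWithin] with r (hr : 0 < r)
    exact tsub_le_iff_right.2 (key r hr)
  · filter_upwards [self_mem_nhdsWithin] with r (hr : 0 < r) using ratio_le_one hr

lemma densityOne_diff_singleton {S : Set ℝ} {t u : ℝ} (hd : densityOne S t) :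
    densityOne (S \ {u}) t := by
  unfold densityOne at *
  convert hd using 2 with r
  congr 1
  rw [show (S \ {u}) ∩ Icc (t - r) (t + r) = (S ∩ Icc (t - r) (t + r)) \ {u} by
    ext x; simp; tauto]
  exact measure_diff_null (by simp)

noncomputable def HasApproxDerivAt (f : ℝ → ℝ) (L t : ℝ) : Prop :=
  ∀ ε > (0:ℝ), densityOne {s : ℝ | s ≠ t ∧ |(f s - f t) / (s - t) - L| < ε} t

noncomputable def ApproxDiffAE (f : ℝ → ℝ) : Prop :=
  ∀ᵐ t ∂(volume.restrict (Icc (0:ℝ) 1)), ∃ L, HasApproxDerivAt f L t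

/-- The filter of sets containing a measurable set of density one at `t`. -/
noncomputable def adFilter (t : ℝ) : Filter ℝ where
  sets := {S | ∃ M, MeasurableSet M ∧ densityOne M t ∧ M ⊆ S}
  univ_sets := ⟨univ, MeasurableSet.univ, densityOne_univ t, subset_rfl⟩
  sets_of_superset := fun ⟨M, hM1, hM2, hM3⟩ hsub => ⟨M, hM1, hM2, hM3.trans hsub⟩
  inter_sets := fun ⟨M, hM1, hM2, hM3⟩ ⟨N, hN1, hN2, hN3⟩ =>
    ⟨M ∩ N, hM1.inter hN1, densityOne_inter hM2 hN2 hN1, inter_subset_inter hM3 hN3⟩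

lemma mem_adFilter_of {t : ℝ} {M : Set ℝ} (hm : MeasurableSet M) (hd : densityOne M t) :
    M ∈ adFilter t := ⟨M, hm, hd, subset_rfl⟩

lemma adFilter_le_nhds (t : ℝ) : adFilter t ≤ nhds t := by
  intro U hU
  obtain ⟨δ, hδ, hball⟩ := Metric.mem_nhds_iff.1 hU
  refine ⟨Ioo (t - δ) (t + δ), measurableSet_Ioo, densityOne_Ioo hδ, fun x hx => hball ?_⟩
  rw [Metric.mem_ball, Real.dist_eq, abs_lt]
  constructor <;> [linarith [hx.1]; linarith [hx.2]]

lemma hasApproxDerivAt_of_tendsto {f : ℝ → ℝ} {L t : ℝ}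
    (hT : Tendsto (fun s => (f s - f t) / (s - t)) (adFilter t ⊓ Filter.principal {t}ᶜ)
      (nhds L)) : HasApproxDerivAt f L t := by
  intro ε hε
  have hmem : {s : ℝ | |(f s - f t) / (s - t) - L| < ε} ∈ adFilter t ⊓ Filter.principal {t}ᶜ := by
    have := hT (Metric.ball_mem_nhds L hε)
    exact this
  rw [Filter.mem_inf_principal] at hmem
  obtain ⟨M, hM1, hM2, hM3⟩ := hmem
  have : M \ {t} ⊆ {s : ℝ | s ≠ t ∧ |(f s - f t) / (s - t) - L| < ε} := by
    intro s hs
    exact ⟨hs.2, hM3 hs.1 hs.2⟩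
  exact densityOne_mono (densityOne_diff_singleton hM2) this

lemma tendsto_quot_of_hasApproxDerivAt {c : ℝ → ℝ} {L t : ℝ} (hc : Measurable c)
    (hd : HasApproxDerivAt c L t) :
    Tendsto (fun s => (c s - c t) / (s - t)) (adFilter t ⊓ Filter.principal {t}ᶜ) (nhds L) := by
  rw [Metric.tendsto_nhds]
  intro ε hε
  have hCmeas : MeasurableSet {s : ℝ | s ≠ t ∧ |(c s - c t) / (s - t) - L| < ε} := by
    apply MeasurableSet.inter
    · exact (measurableSet_singleton t).compl
    · exact measurableSet_lt (((hc.sub measurable_const).div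
        (measurable_id.sub measurable_const)).sub measurable_const).abs measurable_const
  refine mem_of_superset (Filter.inter_mem_inf (mem_adFilter_of hCmeas (hd ε hε))
    (mem_principal_self _)) ?_
  intro s hs
  simpa [Real.dist_eq] using hs.1.2

lemma tendsto_self_adFilter (t : ℝ) :
    Tendsto (fun s : ℝ => s) (adFilter t ⊓ Filter.principal {t}ᶜ) (nhds t) :=
  tendsto_id.mono_left (inf_le_left.trans (adFilter_le_nhds t))

lemma tendsto_of_hasApproxDerivAt {c : ℝ → ℝ} {L t : ℝ} (hc : Measurable c)
    (hd : HasApproxDerivAt c L t) :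
    Tendsto c (adFilter t ⊓ Filter.principal {t}ᶜ) (nhds (c t)) := by
  have hq := tendsto_quot_of_hasApproxDerivAt hc hd
  have hst : Tendsto (fun s : ℝ => s - t) (adFilter t ⊓ Filter.principal {t}ᶜ) (nhds 0) := by
    have := (tendsto_self_adFilter t).sub (tendsto_const_nhds (x := t))
    simpa using this
  have key : Tendsto (fun s => c t + ((c s - c t) / (s - t)) * (s - t))
      (adFilter t ⊓ Filter.principal {t}ᶜ) (nhds (c t)) := by
    have := (tendsto_const_nhds (x := c t)).add (hq.mul hst)
    simpa using this
  apply key.congr'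
  filter_upwards [mem_inf_of_right (mem_principal_self ({t}ᶜ : Set ℝ))] with s hs
  have hst' : s - t ≠ 0 := sub_ne_zero.2 hs
  field_simp
  ring

/-- Lebesgue density theorem in our formulation. -/
lemma ae_densityOne {S : Set ℝ} (hS : MeasurableSet S) :
    ∀ᵐ t ∂(volume : Measure ℝ), t ∈ S → densityOne S t := by
  filter_upwards [Besicovitch.ae_tendsto_measure_inter_div_of_measurableSet volume hS]
    with t ht htS
  have : S.indicator (1 : ℝ → ℝ≥0∞) t = 1 := by simp [indicator_of_mem htS]
  rw [this] at ht
  unfold densityOne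
  apply ht.congr'
  filter_upwards [self_mem_nhdsWithin] with r (hr : 0 < r)
  rw [Real.closedBall_eq_Icc, Real.volume_Icc]
  ring_nf

lemma ae_densityOne_restrict {S : Set ℝ} (hS : MeasurableSet S) :
    ∀ᵐ t ∂(volume.restrict S), densityOne S t := by
  rw [ae_restrict_iff' hS]
  exact ae_densityOne hS

/-- Almost every point is a point of approximate continuity of a measurable function. -/
lemma ae_tendsto_adFilter {f : ℝ → ℝ} (hf : Measurable f) :
    ∀ᵐ t ∂(volume : Measure ℝ), Tendsto f (adFilter t) (nhds (f t)) := by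
  have key : ∀ᵐ t ∂(volume : Measure ℝ), ∀ p q : ℚ,
      t ∈ f ⁻¹' Ioo (p : ℝ) q → densityOne (f ⁻¹' Ioo (p : ℝ) q) t := by
    rw [ae_all_iff]
    intro p
    rw [ae_all_iff]
    intro q
    exact ae_densityOne (hf measurableSet_Ioo)
  filter_upwards [key] with t ht
  rw [Metric.tendsto_nhds]
  intro ε hε
  obtain ⟨p, hp1, hp2⟩ := exists_rat_btwn (show f t - ε < f t by linarith)
  obtain ⟨q, hq1, hq2⟩ := exists_rat_btwn (show f t < f t + ε by linarith)
  have htmem : t ∈ f ⁻¹' Ioo (p : ℝ) q := ⟨hp2, hq1⟩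
  refine mem_of_superset (mem_adFilter_of (hf measurableSet_Ioo) (ht p q htmem)) ?_
  intro s hs
  obtain ⟨h1, h2⟩ := hs
  simp only [mem_setOf_eq, Real.dist_eq, abs_lt]
  constructor <;> linarith

noncomputable def qpoly (n : ℕ) (x y : ℝ) : ℝ := ∑ j ∈ Finset.range n, x ^ j * y ^ (n - 1 - j)

lemma qpoly_mul_sub (n : ℕ) (x y : ℝ) : qpoly n x y * (x - y) = x ^ n - y ^ n :=
  geom_sum₂_mul x y n

lemma qpoly_diag (n : ℕ) (y : ℝ) : qpoly n y y = n * y ^ (n - 1) := by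
  unfold qpoly
  rw [Finset.sum_congr rfl (fun j hj => ?_), Finset.sum_const, Finset.card_range,
    nsmul_eq_mul]
  rw [← pow_add]
  congr 1
  have := Finset.mem_range.1 hj
  omega

lemma measurable_qpoly_comp {f : ℝ → ℝ} (hf : Measurable f) (n : ℕ) (y : ℝ) :
    Measurable (fun s => qpoly n (f s) y) := by
  unfold qpoly
  exact Finset.measurable_sum _ (fun j _ => (hf.pow_const j).mul measurable_const)

lemma hasApproxDerivAt_const_mul {c : ℝ → ℝ} {L t : ℝ} (k : ℝ)
    (hd : HasApproxDerivAt c L t) : HasApproxDerivAt (fun s => k * c s) (k * L) t := by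
  intro ε hε
  have habs : ∀ s : ℝ, (k * c s - k * c t) / (s - t) - k * L
      = k * ((c s - c t) / (s - t) - L) := by
    intro s
    rw [show k * c s - k * c t = k * (c s - c t) by ring, mul_div_assoc]
    ring
  by_cases hk : k = 0
  · have : {s : ℝ | s ≠ t} ⊆ {s : ℝ | s ≠ t ∧ |(k * c s - k * c t) / (s - t) - k * L| < ε} := by
      intro s hs
      refine ⟨hs, ?_⟩
      rw [habs, hk]
      simpa using hε
    apply densityOne_mono _ this
    have := densityOne_diff_singleton (u := t) (densityOne_univ t)
    rwa [← compl_eq_univ_diff] at this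
  · have hkpos : 0 < |k| := abs_pos.2 hk
    have hsub : {s : ℝ | s ≠ t ∧ |(c s - c t) / (s - t) - L| < ε / |k|}
        ⊆ {s : ℝ | s ≠ t ∧ |(k * c s - k * c t) / (s - t) - k * L| < ε} := by
      intro s hs
      refine ⟨hs.1, ?_⟩
      rw [habs, abs_mul]
      calc |k| * |(c s - c t) / (s - t) - L| < |k| * (ε / |k|) := by
            exact (mul_lt_mul_iff_right₀ hkpos).2 hs.2
        _ = ε := by field_simp
    exact densityOne_mono (hd (ε / |k|) (by positivity)) hsub

lemma part1 (h : ℝ → ℝ) (hmeas : Measurable h)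
    (hnad : ∀ t ∈ Icc (0:ℝ) 1, ∀ L : ℝ, ¬ HasApproxDerivAt h L t) :
    ∀ n : ℕ, 0 < n → ∀ c : ℕ → ℝ → ℝ,
      (∀ i < n, Measurable (c i) ∧ ApproxDiffAE (c i)) →
      ∀ X : Set ℝ, MeasurableSet X → X ⊆ Icc (0:ℝ) 1 → 0 < volume X →
        ¬ (∀ᵐ t ∂(volume.restrict X),
            h t ^ n + ∑ i ∈ Finset.range n, c i t * h t ^ i = 0) := by
  intro n
  induction n using Nat.strong_induction_on with
  | _ n ih =>
  intro hn c hc X hXm hXsub hXpos hae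
  -- the "derivative in y" function
  set g : ℝ → ℝ := fun t => qpoly n (h t) (h t)
      + ∑ i ∈ Finset.range n, c i t * qpoly i (h t) (h t) with hgdef
  have hqd : ∀ m : ℕ, Measurable (fun t => qpoly m (h t) (h t)) := by
    intro m
    unfold qpoly
    exact Finset.measurable_sum _ (fun j _ => (hmeas.pow_const j).mul (hmeas.pow_const _))
  have hgmeas : Measurable g :=
    (hqd n).add (Finset.measurable_sum _
      (fun i hi => ((hc i (Finset.mem_range.1 hi)).1).mul (hqd i)))
  -- the evaluation of the polynomial relation
  set P : ℝ → ℝ := fun t => h t ^ n + ∑ i ∈ Finset.range n, c i t * h t ^ i with hPdef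
  have hPmeas : Measurable P :=
    (hmeas.pow_const n).add (Finset.measurable_sum _
      (fun i hi => ((hc i (Finset.mem_range.1 hi)).1).mul (hmeas.pow_const i)))
  set X₁ : Set ℝ := X ∩ {t | g t = 0} with hX₁def
  have hX₁m : MeasurableSet X₁ := hXm.inter (measurableSet_eq_fun hgmeas measurable_const)
  by_cases hX1 : volume X₁ = 0
  · -- main case: the derivative is nonzero on a positive measure subset
    set W : Set ℝ := X ∩ {t | g t ≠ 0} with hWdef
    have hWm : MeasurableSet W :=
      hXm.inter (measurableSet_eq_fun hgmeas measurable_const).compl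
    have hWpos : 0 < volume W := by
      have hsub : X ⊆ X₁ ∪ W := by
        intro x hx
        by_cases hgx : g x = 0
        · exact Or.inl ⟨hx, hgx⟩
        · exact Or.inr ⟨hx, hgx⟩
      have := (measure_mono hsub).trans (measure_union_le (μ := volume) X₁ W)
      rw [hX1, zero_add] at this
      exact lt_of_lt_of_le hXpos this
    have haeX : ∀ᵐ t ∂(volume : Measure ℝ), t ∈ X → P t = 0 := (ae_restrict_iff' hXm).1 hae
    have hnull : volume {t | t ∈ X ∧ ¬ P t = 0} = 0 := by
      have : {t | t ∈ X ∧ ¬ P t = 0} ⊆ {t | ¬ (t ∈ X → P t = 0)} := by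
        intro t ht; intro hcon; exact ht.2 (hcon ht.1)
      exact measure_mono_null this haeX
    set Z : Set ℝ := W ∩ {t | P t = 0} with hZdef
    have hZm : MeasurableSet Z := hWm.inter (measurableSet_eq_fun hPmeas measurable_const)
    have hZpos : 0 < volume Z := by
      have hsub : W ⊆ Z ∪ {t | t ∈ X ∧ ¬ P t = 0} := by
        intro x hx
        by_cases hPx : P x = 0
        · exact Or.inl ⟨hx, hPx⟩
        · exact Or.inr ⟨hx.1, hPx⟩
      have := (measure_mono hsub).trans (measure_union_le (μ := volume) _ _)
      rw [hnull, add_zero] at this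
      exact lt_of_lt_of_le hWpos this
    have hZsub : Z ⊆ Icc (0:ℝ) 1 := fun x hx => hXsub hx.1.1
    -- a.e. properties on Z
    have A1 : ∀ᵐ t ∂(volume.restrict Z), densityOne Z t := ae_densityOne_restrict hZm
    have A2 : ∀ᵐ t ∂(volume.restrict Z), ∀ i : ℕ, i < n →
        ∃ L, HasApproxDerivAt (c i) L t := by
      rw [ae_all_iff]
      intro i
      by_cases hi : i < n
      · exact (Eventually.filter_mono (ae_mono (Measure.restrict_mono hZsub le_rfl))
          (hc i hi).2).mono (fun t ht _ => ht)
      · exact Eventually.of_forall (fun t hcon => absurd hcon hi)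
    have A3 : ∀ᵐ t ∂(volume.restrict Z), Tendsto h (adFilter t) (nhds (h t)) :=
      ae_restrict_of_ae (ae_tendsto_adFilter hmeas)
    have A4 : ∀ᵐ t ∂(volume.restrict Z), t ∈ Z := ae_restrict_mem hZm
    haveI : (ae (volume.restrict Z)).NeBot := by
      rw [ae_neBot]
      intro hcon
      rw [← Measure.restrict_apply_univ Z, hcon] at hZpos
      simp at hZpos
    obtain ⟨t, hdZ, hLs, hcont, htZ⟩ := (A1.and (A2.and (A3.and A4))).exists
    have htX : t ∈ X := htZ.1.1
    have hgne : g t ≠ 0 := htZ.1.2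
    have hPt : P t = 0 := htZ.2
    set L : ℕ → ℝ := fun i => if hi : i < n then (hLs i hi).choose else 0 with hLdef
    have hL : ∀ i, i < n → HasApproxDerivAt (c i) (L i) t := by
      intro i hi
      rw [hLdef]
      simp only [hi, dif_pos]
      exact (hLs i hi).choose_spec
    set 𝓖 : Filter ℝ := adFilter t ⊓ Filter.principal {t}ᶜ with h𝓖def
    set y : ℝ := h t with hydef
    have hTh : Tendsto h 𝓖 (nhds y) := hcont.mono_left inf_le_left
    have hTq : ∀ m : ℕ, Tendsto (fun s => qpoly m (h s) y) 𝓖 (nhds (qpoly m y y)) := by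
      intro m
      unfold qpoly
      exact tendsto_finset_sum _ (fun j _ => (hTh.pow j).mul_const _)
    have hTc : ∀ i, i < n → Tendsto (c i) 𝓖 (nhds (c i t)) :=
      fun i hi => tendsto_of_hasApproxDerivAt (hc i hi).1 (hL i hi)
    have hTd : ∀ i, i < n →
        Tendsto (fun s => (c i s - c i t) / (s - t)) 𝓖 (nhds (L i)) :=
      fun i hi => tendsto_quot_of_hasApproxDerivAt (hc i hi).1 (hL i hi)
    set G : ℝ → ℝ := fun s => qpoly n (h s) y
        + ∑ i ∈ Finset.range n, c i s * qpoly i (h s) y with hGdef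
    have hTG : Tendsto G 𝓖 (nhds (g t)) := by
      rw [hgdef]
      exact (hTq n).add (tendsto_finset_sum _
        (fun i hi => (hTc i (Finset.mem_range.1 hi)).mul (hTq i)))
    set D : ℝ → ℝ := fun s => ∑ i ∈ Finset.range n,
        ((c i s - c i t) / (s - t)) * y ^ i with hDdef
    set D₀ : ℝ := ∑ i ∈ Finset.range n, L i * y ^ i with hD₀def
    have hTD : Tendsto D 𝓖 (nhds D₀) :=
      tendsto_finset_sum _ (fun i hi => (hTd i (Finset.mem_range.1 hi)).mul_const _)
    have hGne : ∀ᶠ s in 𝓖, G s ≠ 0 := hTG.eventually_ne hgne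
    have hZmem : Z ∈ 𝓖 := mem_inf_of_left (mem_adFilter_of hZm hdZ)
    have htc : ({t}ᶜ : Set ℝ) ∈ 𝓖 := mem_inf_of_right (mem_principal_self _)
    have hEq : ∀ᶠ s in 𝓖, (h s - h t) / (s - t) = -D s / G s := by
      filter_upwards [hGne, hZmem, htc] with s hGs hsZ hst
      have hst' : s - t ≠ 0 := sub_ne_zero.2 hst
      have rels : P s = 0 := hsZ.2
      have e1 : (h s - y) * G s
          = (h s ^ n - y ^ n) + ∑ i ∈ Finset.range n, c i s * (h s ^ i - y ^ i) := by
        rw [hGdef]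
        simp only [mul_add, Finset.mul_sum]
        congr 1
        · rw [mul_comm]; exact qpoly_mul_sub n (h s) y
        · apply Finset.sum_congr rfl
          intro i _
          rw [← qpoly_mul_sub i (h s) y]
          ring
      have e2 : (s - t) * D s = ∑ i ∈ Finset.range n, (c i s - c i t) * y ^ i := by
        rw [hDdef]
        rw [Finset.mul_sum]
        apply Finset.sum_congr rfl
        intro i _
        field_simp
      have e3 : (h s - y) * G s + (s - t) * D s = 0 := by
        rw [e1, e2]
        have rels' : h s ^ n + ∑ i ∈ Finset.range n, c i s * h s ^ i = 0 := rels
        have relt' : y ^ n + ∑ i ∈ Finset.range n, c i t * y ^ i = 0 := hPt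
        simp only [mul_sub, sub_mul, Finset.sum_sub_distrib] at *
        linarith [rels', relt']
      rw [div_eq_div_iff hst' hGs]
      rw [hydef] at e3
      linarith [e3]
    have hquot : Tendsto (fun s => (h s - h t) / (s - t)) 𝓖 (nhds (-D₀ / g t)) := by
      apply Tendsto.congr' (hEq.mono (fun s hs => hs.symm))
      exact (hTD.neg).div hTG hgne
    exact hnad t (hXsub htX) _ (hasApproxDerivAt_of_tendsto hquot)
  · -- inductive case: the derivative vanishes on a positive measure subset
    have hn2 : 2 ≤ n := by
      by_contra hcon
      have hn1 : n = 1 := by omega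
      apply hX1
      have : X₁ = ∅ := by
        apply eq_empty_iff_forall_notMem.2
        intro t ht
        have hg : g t = 0 := ht.2
        rw [hgdef, hn1] at hg
        simp [qpoly_diag] at hg
      rw [this]
      exact measure_empty
    set m := n - 1 with hmdef
    have hnm : n = m + 1 := by omega
    have hm : 0 < m := by omega
    set c' : ℕ → ℝ → ℝ := fun j t => ((j + 1 : ℝ) / n) * c (j + 1) t with hc'def
    have hc' : ∀ j < m, Measurable (c' j) ∧ ApproxDiffAE (c' j) := by
      intro j hj
      obtain ⟨hcm, hcd⟩ := hc (j + 1) (by omega)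
      refine ⟨measurable_const.mul hcm, ?_⟩
      filter_upwards [hcd] with t ⟨L, hL⟩
      exact ⟨((j + 1 : ℝ) / n) * L, hasApproxDerivAt_const_mul _ hL⟩
    refine ih m (by omega) hm c' hc' X₁ hX₁m
      ((inter_subset_left).trans hXsub) (zero_lt_iff.2 hX1) ?_
    apply ae_restrict_of_forall_mem hX₁m
    intro t ht
    have hg : g t = 0 := ht.2
    have hnne : (n : ℝ) ≠ 0 := by positivity
    have expand : g t = (n : ℝ) * (h t ^ m + ∑ j ∈ Finset.range m, c' j t * h t ^ j) := by
      rw [hgdef]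
      simp only [qpoly_diag]
      rw [hnm, Finset.sum_range_succ']
      simp only [Nat.cast_zero, zero_mul, mul_zero, add_zero, Nat.add_sub_cancel]
      rw [mul_add, Finset.mul_sum]
      congr 1
      apply Finset.sum_congr rfl
      intro j _
      rw [hc'def]
      rw [show ((n:ℝ)) = (m:ℝ) + 1 by rw [hnm]; push_cast; ring]
      have hm1 : (m:ℝ) + 1 ≠ 0 := by positivity
      push_cast
      field_simp
    rw [expand] at hg
    rcases mul_eq_zero.1 hg with h1 | h2
    · exact absurd h1 hnne
    · exact h2

theorem stmt_18 (h : ℝ → ℝ) (hmeas : Measurable h)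
    (hnad : ∀ t ∈ Icc (0:ℝ) 1, ∀ L : ℝ, ¬ HasApproxDerivAt h L t) :
    (∀ n : ℕ, 0 < n → ∀ c : ℕ → ℝ → ℝ,
      (∀ i < n, Measurable (c i) ∧ ApproxDiffAE (c i)) →
      ∀ X : Set ℝ, MeasurableSet X → X ⊆ Icc (0:ℝ) 1 → 0 < volume X →
        ¬ (∀ᵐ t ∂(volume.restrict X),
            h t ^ n + ∑ i ∈ Finset.range n, c i t * h t ^ i = 0))
    ∧ (∀ a : ℝ → ℝ, Measurable a → ApproxDiffAE a →
        ∀ᵐ t ∂(volume.restrict (Icc (0:ℝ) 1)), h t - a t ≠ 0) := by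
  refine ⟨part1 h hmeas hnad, ?_⟩
  intro a hameas haAD
  by_contra hcon
  set B : Set ℝ := {t | h t - a t = 0} with hBdef
  have hBm : MeasurableSet B := measurableSet_eq_fun (hmeas.sub hameas) measurable_const
  set X : Set ℝ := B ∩ Icc (0:ℝ) 1 with hXdef
  have hXm : MeasurableSet X := hBm.inter measurableSet_Icc
  have hXpos : 0 < volume X := by
    rw [eventually_iff, mem_ae_iff] at hcon
    have heq : {x | h x - a x ≠ 0}ᶜ = B := by
      ext t; simp [hBdef]
    rw [heq] at hcon
    rw [Measure.restrict_apply' measurableSet_Icc] at hcon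
    exact zero_lt_iff.2 hcon
  set c : ℕ → ℝ → ℝ := fun _ t => (-1 : ℝ) * a t with hcdef
  have hc : ∀ i < 1, Measurable (c i) ∧ ApproxDiffAE (c i) := by
    intro i _
    refine ⟨measurable_const.mul hameas, ?_⟩
    filter_upwards [haAD] with t ⟨L, hL⟩
    exact ⟨(-1) * L, hasApproxDerivAt_const_mul _ hL⟩
  refine part1 h hmeas hnad 1 one_pos c hc X hXm inter_subset_right hXpos ?_
  apply ae_restrict_of_forall_mem hXm
  intro t ht
  have : h t - a t = 0 := ht.1
  simp [hcdef]
  linarith
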